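/- Box inequalities: Let P be a convex lattice polygon with P ⊆ [0, p'] × [0, p] for positive integers p ≤ p', such that P contains points with first coordinate 0, points with first coordinate p', points with second coordinate 0, and points with second coordinate p. Let q be the length of the segment P ∩ {x : x₂ = p} and q' the length of the segment P ∩ {x : x₂ = 0} (each is a nonnegative integer, possibly 0). Then b(P) ≤ q + q' + 2p and a(P) ≥ p(q + q')/2. -/

import Mathlib

open Set MeasureTheory

noncomputable section

/-- A point of the plane is a lattice point if both coordinates are integers. -/
def latticePt (x : ℝ × ℝ) : Prop := (∃ m : ℤ, x.1 = m) ∧ (∃ n : ℤ, x.2 = n)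

/-- A convex lattice polygon: the convex hull of finitely many lattice points,
with nonempty interior (i.e. 2-dimensional). -/
def IsConvexLatticePolygon (P : Set (ℝ × ℝ)) : Prop :=
  (∃ V : Finset (ℝ × ℝ), (∀ v ∈ V, latticePt v) ∧ P = convexHull ℝ (V : Set (ℝ × ℝ))) ∧
    (interior P).Nonempty

/-- Number of lattice points on the boundary of `P`. -/
def bcount (P : Set (ℝ × ℝ)) : ℕ := {x | x ∈ frontier P ∧ latticePt x}.ncard

/-- Number of lattice points in the interior of `P`. -/
def icount (P : Set (ℝ × ℝ)) : ℕ := {x | x ∈ interior P ∧ latticePt x}.ncard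

/-- The area of `P` (two-dimensional Lebesgue measure). -/
def area (P : Set (ℝ × ℝ)) : ℝ := (volume P).toReal

/-- The affine map `x ↦ A x + t` given by an integer matrix `A` and integer vector `t`. -/
def affineLatticeMap (A : Matrix (Fin 2) (Fin 2) ℤ) (t : ℤ × ℤ) (x : ℝ × ℝ) : ℝ × ℝ :=
  ((A 0 0 : ℝ) * x.1 + (A 0 1 : ℝ) * x.2 + (t.1 : ℝ),
   (A 1 0 : ℝ) * x.1 + (A 1 1 : ℝ) * x.2 + (t.2 : ℝ))

/-- `P` and `Q` are lattice equivalent: `Q = Φ(P)` for an affine map `Φ(x) = A x + t`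
with `A` an integer matrix of determinant `±1` and `t` an integer vector. -/
def LatticeEquiv (P Q : Set (ℝ × ℝ)) : Prop :=
  ∃ (A : Matrix (Fin 2) (Fin 2) ℤ) (t : ℤ × ℤ),
    (A.det = 1 ∨ A.det = -1) ∧ Q = affineLatticeMap A t '' P

/-- The dilated standard triangle `kΔ = conv{(0,0), (k,0), (0,k)}`. -/
def stdTriangle (k : ℕ) : Set (ℝ × ℝ) :=
  convexHull ℝ {((0 : ℝ), (0 : ℝ)), ((k : ℝ), (0 : ℝ)), ((0 : ℝ), (k : ℝ))}

/-- `P⁽¹⁾`: the convex hull of the lattice points in the interior of `P`. -/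
def innerHull (P : Set (ℝ × ℝ)) : Set (ℝ × ℝ) :=
  convexHull ℝ {x | x ∈ interior P ∧ latticePt x}

/-- Box inequalities: if `P` fits tightly in the box `[0, p'] × [0, p]` with `p ≤ p'`,
and meets the top and bottom edges of the box in segments of (integer) lengths `q`
and `q'`, then `b(P) ≤ q + q' + 2p` and `a(P) ≥ p(q + q')/2`. -/
theorem box_inequalities (P : Set (ℝ × ℝ)) (hP : IsConvexLatticePolygon P)
    (p p' : ℕ) (hp : 1 ≤ p) (hpp' : p ≤ p')
    (hsub : P ⊆ Set.Icc ((0 : ℝ), (0 : ℝ)) ((p' : ℝ), (p : ℝ)))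
    (hleft : ∃ x ∈ P, x.1 = 0) (hright : ∃ x ∈ P, x.1 = (p' : ℝ))
    (hbot : ∃ x ∈ P, x.2 = 0) (htop : ∃ x ∈ P, x.2 = (p : ℝ))
    (q q' : ℕ)
    (htopseg : ∃ α : ℝ,
      {x : ℝ × ℝ | x ∈ P ∧ x.2 = (p : ℝ)} = Set.Icc (α, (p : ℝ)) (α + (q : ℝ), (p : ℝ)))
    (hbotseg : ∃ α : ℝ,
      {x : ℝ × ℝ | x ∈ P ∧ x.2 = 0} = Set.Icc (α, (0 : ℝ)) (α + (q' : ℝ), (0 : ℝ))) :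
    bcount P ≤ q + q' + 2 * p ∧ (p : ℝ) * ((q : ℝ) + (q' : ℝ)) / 2 ≤ area P := by
  classical
  obtain ⟨⟨V, hV, hPV⟩, z, hz⟩ := hP
  obtain ⟨α, hα⟩ := htopseg
  obtain ⟨β, hβ⟩ := hbotseg
  have hPconv : Convex ℝ P := by rw [hPV]; exact convex_convexHull ℝ _
  have hPcompact : IsCompact P := by rw [hPV]; exact V.finite_toSet.isCompact_convexHull ℝ
  have hPclosed : IsClosed P := hPcompact.isClosed
  have hp0 : (0 : ℝ) < p := by exact_mod_cast hp
  have hq0 : (0 : ℝ) ≤ q := Nat.cast_nonneg q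
  have hq'0 : (0 : ℝ) ≤ q' := Nat.cast_nonneg q'
  have hTopMem : ∀ s : ℝ, α ≤ s → s ≤ α + q → ((s, (p : ℝ)) : ℝ × ℝ) ∈ P := by
    intro s h1 h2
    have hmem : ((s, (p : ℝ)) : ℝ × ℝ) ∈ {x : ℝ × ℝ | x ∈ P ∧ x.2 = (p : ℝ)} := by
      rw [hα]
      simp only [Set.mem_Icc, Prod.mk_le_mk]
      exact ⟨⟨h1, le_rfl⟩, h2, le_rfl⟩
    exact hmem.1
  have hBotMem : ∀ s : ℝ, β ≤ s → s ≤ β + q' → ((s, (0 : ℝ)) : ℝ × ℝ) ∈ P := by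
    intro s h1 h2
    have hmem : ((s, (0 : ℝ)) : ℝ × ℝ) ∈ {x : ℝ × ℝ | x ∈ P ∧ x.2 = 0} := by
      rw [hβ]
      simp only [Set.mem_Icc, Prod.mk_le_mk]
      exact ⟨⟨h1, le_rfl⟩, h2, le_rfl⟩
    exact hmem.1
  constructor
  · -- boundary lattice point count
    have hfr : frontier P ⊆ P := hPclosed.frontier_subset
    -- interior points at every intermediate height
    have hmidpt : ∀ y : ℝ, 0 < y → y < p → ∃ w ∈ interior P, w.2 = y := by
      intro y hy0 hyp
      rcases lt_trichotomy z.2 y with h | h | h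
      · have hu : ((α, (p : ℝ)) : ℝ × ℝ) ∈ P :=
          hTopMem α le_rfl (le_add_of_nonneg_right hq0)
        have hden : (0 : ℝ) < (p : ℝ) - z.2 := by linarith
        set t : ℝ := (y - z.2) / ((p : ℝ) - z.2) with htdef
        have ht0 : 0 < t := div_pos (by linarith) hden
        have ht1 : t < 1 := (div_lt_one hden).2 (by linarith)
        have hC : t * ((p : ℝ) - z.2) = y - z.2 := div_mul_cancel₀ _ hden.ne'
        refine ⟨(1 - t) • z + t • ((α, (p : ℝ)) : ℝ × ℝ), ?_, ?_⟩
        · exact hPconv.combo_interior_self_mem_interior hz hu (by linarith) ht0.le (by ring)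
        · simp only [Prod.snd_add, Prod.smul_snd, smul_eq_mul]
          linear_combination hC
      · exact ⟨z, hz, h⟩
      · have hu : ((β, (0 : ℝ)) : ℝ × ℝ) ∈ P :=
          hBotMem β le_rfl (le_add_of_nonneg_right hq'0)
        have hden : (0 : ℝ) < z.2 := lt_trans hy0 h
        set t : ℝ := (z.2 - y) / z.2 with htdef
        have ht0 : 0 < t := div_pos (by linarith) hden
        have ht1 : t < 1 := (div_lt_one hden).2 (by linarith)
        have hC : t * z.2 = z.2 - y := div_mul_cancel₀ _ hden.ne'
        refine ⟨(1 - t) • z + t • ((β, (0 : ℝ)) : ℝ × ℝ), ?_, ?_⟩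
        · exact hPconv.combo_interior_self_mem_interior hz hu (by linarith) ht0.le (by ring)
        · simp only [Prod.snd_add, Prod.smul_snd, smul_eq_mul]
          linear_combination -hC
    -- horizontal slices of P
    set T : ℕ → Set ℝ := fun k => {t : ℝ | ((t, (k : ℝ)) : ℝ × ℝ) ∈ P} with hTdef
    have hTclosed : ∀ k, IsClosed (T k) :=
      fun k => IsClosed.preimage (continuous_id.prodMk continuous_const) hPclosed
    have hTsub : ∀ k, T k ⊆ Set.Icc (0 : ℝ) (p' : ℝ) := by
      intro k t ht
      have h1 := hsub ht
      simp only [Set.mem_Icc, Prod.le_def] at h1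
      exact ⟨h1.1.1, h1.2.1⟩
    have hTbdd_b : ∀ k, BddBelow (T k) := fun k => BddBelow.mono (hTsub k) bddBelow_Icc
    have hTbdd_a : ∀ k, BddAbove (T k) := fun k => BddAbove.mono (hTsub k) bddAbove_Icc
    -- at intermediate heights, boundary points are slice endpoints
    have hmid : ∀ k : ℕ, 0 < k → k < p → ∀ x : ℝ × ℝ, x ∈ frontier P → x.2 = (k : ℝ) →
        x.1 = sInf (T k) ∨ x.1 = sSup (T k) := by
      intro k hk0 hkp x hxf hx2
      have hkr0 : (0 : ℝ) < k := by exact_mod_cast hk0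
      have hkrp : (k : ℝ) < p := by exact_mod_cast hkp
      obtain ⟨w, hw, hw2⟩ := hmidpt k hkr0 hkrp
      have hwT : w.1 ∈ T k := by
        show ((w.1, (k : ℝ)) : ℝ × ℝ) ∈ P
        rw [← hw2, Prod.mk.eta]
        exact interior_subset hw
      have hne : (T k).Nonempty := ⟨w.1, hwT⟩
      have hlmem : sInf (T k) ∈ T k := (hTclosed k).csInf_mem hne (hTbdd_b k)
      have hrmem : sSup (T k) ∈ T k := (hTclosed k).csSup_mem hne (hTbdd_a k)
      have hxT : x.1 ∈ T k := by
        show ((x.1, (k : ℝ)) : ℝ × ℝ) ∈ P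
        rw [← hx2, Prod.mk.eta]
        exact hfr hxf
      have hxl : sInf (T k) ≤ x.1 := csInf_le (hTbdd_b k) hxT
      have hxr : x.1 ≤ sSup (T k) := le_csSup (hTbdd_a k) hxT
      by_contra hcon
      push_neg at hcon
      have hl : sInf (T k) < x.1 := lt_of_le_of_ne hxl (Ne.symm hcon.1)
      have hr : x.1 < sSup (T k) := lt_of_le_of_ne hxr hcon.2
      have hxint : x ∈ interior P := by
        rcases lt_trichotomy x.1 w.1 with h | h | h
        · have hlw : sInf (T k) < w.1 := lt_trans hl h
          set a : ℝ := (x.1 - sInf (T k)) / (w.1 - sInf (T k)) with hadef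
          have hd : (0 : ℝ) < w.1 - sInf (T k) := by linarith
          have ha0 : 0 < a := div_pos (by linarith) hd
          have ha1 : a < 1 := (div_lt_one hd).2 (by linarith)
          have hC : a * (w.1 - sInf (T k)) = x.1 - sInf (T k) := div_mul_cancel₀ _ hd.ne'
          have key : a • w + (1 - a) • ((sInf (T k), (k : ℝ)) : ℝ × ℝ) ∈ interior P :=
            hPconv.combo_interior_self_mem_interior hw hlmem ha0 (by linarith) (by ring)
          have hxx : x = a • w + (1 - a) • ((sInf (T k), (k : ℝ)) : ℝ × ℝ) := by
            refine Prod.ext_iff.2 ⟨?_, ?_⟩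
            · simp only [Prod.fst_add, Prod.smul_fst, smul_eq_mul]
              linear_combination -hC
            · simp only [Prod.snd_add, Prod.smul_snd, smul_eq_mul]
              rw [hx2, hw2]; ring
          rw [hxx]; exact key
        · have hxx : x = w := Prod.ext_iff.2 ⟨h, by rw [hx2, hw2]⟩
          rw [hxx]; exact hw
        · have hrw : w.1 < sSup (T k) := lt_trans h hr
          set a : ℝ := (sSup (T k) - x.1) / (sSup (T k) - w.1) with hadef
          have hd : (0 : ℝ) < sSup (T k) - w.1 := by linarith
          have ha0 : 0 < a := div_pos (by linarith) hd
          have ha1 : a < 1 := (div_lt_one hd).2 (by linarith)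
          have hC : a * (sSup (T k) - w.1) = sSup (T k) - x.1 := div_mul_cancel₀ _ hd.ne'
          have key : a • w + (1 - a) • ((sSup (T k), (k : ℝ)) : ℝ × ℝ) ∈ interior P :=
            hPconv.combo_interior_self_mem_interior hw hrmem ha0 (by linarith) (by ring)
          have hxx : x = a • w + (1 - a) • ((sSup (T k), (k : ℝ)) : ℝ × ℝ) := by
            refine Prod.ext_iff.2 ⟨?_, ?_⟩
            · simp only [Prod.fst_add, Prod.smul_fst, smul_eq_mul]
              linear_combination hC
            · simp only [Prod.snd_add, Prod.smul_snd, smul_eq_mul]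
              rw [hx2, hw2]; ring
          rw [hxx]; exact key
      rw [hPclosed.frontier_eq] at hxf
      exact hxf.2 hxint
    -- the bounding finite set
    set Bbot : Finset (ℝ × ℝ) :=
      (Finset.Icc ⌈β⌉ ⌊β + (q' : ℝ)⌋).image (fun m : ℤ => ((m : ℝ), (0 : ℝ))) with hBbot
    set Btop : Finset (ℝ × ℝ) :=
      (Finset.Icc ⌈α⌉ ⌊α + (q : ℝ)⌋).image (fun m : ℤ => ((m : ℝ), (p : ℝ))) with hBtop
    set Bmid : Finset (ℝ × ℝ) :=
      (Finset.Ioo 0 p).biUnion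
        (fun k => ({(sInf (T k), (k : ℝ)), (sSup (T k), (k : ℝ))} : Finset (ℝ × ℝ))) with hBmid
    have hsubB : {x : ℝ × ℝ | x ∈ frontier P ∧ latticePt x} ⊆ ↑(Bbot ∪ Btop ∪ Bmid) := by
      rintro x ⟨hxf, ⟨m, hm⟩, ⟨n, hn⟩⟩
      have hxP : x ∈ P := hfr hxf
      have hbox := hsub hxP
      simp only [Set.mem_Icc, Prod.le_def] at hbox
      have hx2a : (0 : ℝ) ≤ x.2 := hbox.1.2
      have hx2b : x.2 ≤ (p : ℝ) := hbox.2.2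
      have hn0 : (0 : ℤ) ≤ n := by exact_mod_cast hn ▸ hx2a
      have hnp : n ≤ (p : ℤ) := by exact_mod_cast hn ▸ hx2b
      simp only [Finset.coe_union, Set.mem_union, Finset.mem_coe]
      by_cases hn0' : n = 0
      · -- bottom edge
        have hx20 : x.2 = 0 := by rw [hn, hn0']; norm_num
        have hxslice : x ∈ Set.Icc (β, (0 : ℝ)) (β + (q' : ℝ), 0) := by
          rw [← hβ]; exact ⟨hxP, hx20⟩
        simp only [Set.mem_Icc, Prod.le_def] at hxslice
        have h1 : β ≤ x.1 := hxslice.1.1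
        have h2 : x.1 ≤ β + q' := hxslice.2.1
        have hm1 : ⌈β⌉ ≤ m := Int.ceil_le.2 (by rw [← hm]; exact h1)
        have hm2 : m ≤ ⌊β + (q' : ℝ)⌋ := Int.le_floor.2 (by rw [← hm]; exact h2)
        left; left
        have hx : x = ((m : ℝ), (0 : ℝ)) := Prod.ext_iff.2 ⟨hm, hx20⟩
        rw [hx]
        exact Finset.mem_image.2 ⟨m, Finset.mem_Icc.2 ⟨hm1, hm2⟩, rfl⟩
      · by_cases hnp' : n = (p : ℤ)
        · -- top edge
          have hx2p : x.2 = (p : ℝ) := by rw [hn, hnp']; norm_num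
          have hxslice : x ∈ Set.Icc (α, (p : ℝ)) (α + (q : ℝ), (p : ℝ)) := by
            rw [← hα]; exact ⟨hxP, hx2p⟩
          simp only [Set.mem_Icc, Prod.le_def] at hxslice
          have h1 : α ≤ x.1 := hxslice.1.1
          have h2 : x.1 ≤ α + q := hxslice.2.1
          have hm1 : ⌈α⌉ ≤ m := Int.ceil_le.2 (by rw [← hm]; exact h1)
          have hm2 : m ≤ ⌊α + (q : ℝ)⌋ := Int.le_floor.2 (by rw [← hm]; exact h2)
          left; right
          have hx : x = ((m : ℝ), (p : ℝ)) := Prod.ext_iff.2 ⟨hm, hx2p⟩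
          rw [hx]
          exact Finset.mem_image.2 ⟨m, Finset.mem_Icc.2 ⟨hm1, hm2⟩, rfl⟩
        · -- middle
          set k : ℕ := n.toNat with hkdef
          have hk0 : 0 < k := by omega
          have hkp : k < p := by omega
          have hx2 : x.2 = (k : ℝ) := by
            rw [hn, hkdef]
            norm_cast
            omega
          right
          refine Finset.mem_biUnion.2 ⟨k, Finset.mem_Ioo.2 ⟨hk0, hkp⟩, ?_⟩
          rcases hmid k hk0 hkp x hxf hx2 with h | h
          · have hx : x = (sInf (T k), (k : ℝ)) := Prod.ext_iff.2 ⟨h, hx2⟩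
            rw [hx]; exact Finset.mem_insert_self _ _
          · have hx : x = (sSup (T k), (k : ℝ)) := Prod.ext_iff.2 ⟨h, hx2⟩
            rw [hx]
            exact Finset.mem_insert.2 (Or.inr (Finset.mem_singleton_self _))
    have hcard : (Bbot ∪ Btop ∪ Bmid).card ≤ q + q' + 2 * p := by
      have h1 : Bbot.card ≤ q' + 1 := by
        refine le_trans Finset.card_image_le ?_
        rw [Int.card_Icc]
        have hfl : ⌊β + (q' : ℝ)⌋ = ⌊β⌋ + (q' : ℤ) := by
          rw [show ((q' : ℝ)) = ((q' : ℤ) : ℝ) by push_cast; ring, Int.floor_add_intCast]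
        have hle : ⌊β⌋ ≤ ⌈β⌉ := Int.floor_le_ceil β
        omega
      have h2 : Btop.card ≤ q + 1 := by
        refine le_trans Finset.card_image_le ?_
        rw [Int.card_Icc]
        have hfl : ⌊α + (q : ℝ)⌋ = ⌊α⌋ + (q : ℤ) := by
          rw [show ((q : ℝ)) = ((q : ℤ) : ℝ) by push_cast; ring, Int.floor_add_intCast]
        have hle : ⌊α⌋ ≤ ⌈α⌉ := Int.floor_le_ceil α
        omega
      have h3 : Bmid.card ≤ (p - 1) * 2 := by
        refine le_trans Finset.card_biUnion_le ?_
        have hb : ∀ k ∈ Finset.Ioo 0 p,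
            ({(sInf (T k), (k : ℝ)), (sSup (T k), (k : ℝ))} : Finset (ℝ × ℝ)).card ≤ 2 := by
          intro k _
          refine le_trans (Finset.card_insert_le _ _) ?_
          simp
        calc ∑ k ∈ Finset.Ioo 0 p,
              ({(sInf (T k), (k : ℝ)), (sSup (T k), (k : ℝ))} : Finset (ℝ × ℝ)).card
            ≤ ∑ _k ∈ Finset.Ioo 0 p, 2 := Finset.sum_le_sum hb
          _ = (Finset.Ioo 0 p).card * 2 := by rw [Finset.sum_const, smul_eq_mul]
          _ = (p - 1) * 2 := by rw [Nat.card_Ioo]; omega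
      calc (Bbot ∪ Btop ∪ Bmid).card
          ≤ (Bbot ∪ Btop).card + Bmid.card := Finset.card_union_le _ _
        _ ≤ Bbot.card + Btop.card + Bmid.card := by
            have := Finset.card_union_le Bbot Btop; omega
        _ ≤ (q' + 1) + (q + 1) + (p - 1) * 2 := by omega
        _ ≤ q + q' + 2 * p := by omega
    calc bcount P ≤ (Bbot ∪ Btop ∪ Bmid).card := by
          rw [bcount, ← Set.ncard_coe_finset]
          exact Set.ncard_le_ncard hsubB (Finset.finite_toSet _)
      _ ≤ q + q' + 2 * p := hcard
  · -- area bound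
    have hPmeas : MeasurableSet P := hPclosed.measurableSet
    obtain ⟨f, hfdef⟩ : ∃ f : ℝ → ℝ, f = fun y => (1 - y / p) * β + (y / p) * α := ⟨_, rfl⟩
    obtain ⟨g, hgdef⟩ : ∃ g : ℝ → ℝ, g = fun y => (1 - y / p) * (β + q') + (y / p) * (α + q) :=
      ⟨_, rfl⟩
    have hcf : Continuous f := by rw [hfdef]; fun_prop
    have hcg : Continuous g := by rw [hgdef]; fun_prop
    have hfg : ∀ y ∈ Set.Ioo (0 : ℝ) (p : ℝ), f y ≤ g y := by
      intro y hy
      have h1 : 0 ≤ y / p := div_nonneg hy.1.le hp0.le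
      have h2 : y / p ≤ 1 := (div_le_one hp0).2 hy.2.le
      have hgf : g y - f y = (1 - y / p) * q' + (y / p) * q := by
        simp only [hfdef, hgdef]; ring
      nlinarith [mul_nonneg (by linarith : (0 : ℝ) ≤ 1 - y / p) hq'0, mul_nonneg h1 hq0]
    have hregion : regionBetween f g (Set.Ioo 0 (p : ℝ)) ⊆ Prod.swap ⁻¹' P := by
      rintro ⟨y, x⟩ ⟨hy, hx⟩
      have hy' : y ∈ Set.Ioo (0 : ℝ) (p : ℝ) := hy
      have hx' : x ∈ Set.Ioo (f y) (g y) := hx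
      have ht0 : 0 ≤ y / p := div_nonneg hy'.1.le hp0.le
      have ht1 : y / p ≤ 1 := (div_le_one hp0).2 hy'.2.le
      have hw : 0 < g y - f y := by linarith [hx'.1, hx'.2]
      set s : ℝ := (x - f y) / (g y - f y) with hsdef
      have hs0 : 0 ≤ s := div_nonneg (by linarith [hx'.1]) hw.le
      have hs1 : s ≤ 1 := (div_le_one hw).2 (by linarith [hx'.2])
      have hu : ((β + s * q', (0 : ℝ)) : ℝ × ℝ) ∈ P := by
        refine hBotMem _ (le_add_of_nonneg_right (mul_nonneg hs0 hq'0)) ?_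
        have := mul_le_mul_of_nonneg_right hs1 hq'0
        linarith
      have hv : ((α + s * q, (p : ℝ)) : ℝ × ℝ) ∈ P := by
        refine hTopMem _ (le_add_of_nonneg_right (mul_nonneg hs0 hq0)) ?_
        have := mul_le_mul_of_nonneg_right hs1 hq0
        linarith
      have hmem : (1 - y / p) • ((β + s * q', (0 : ℝ)) : ℝ × ℝ)
          + (y / p) • ((α + s * q, (p : ℝ)) : ℝ × ℝ) ∈ P :=
        hPconv hu hv (by linarith) ht0 (by ring)
      have hF : f y = (1 - y / p) * β + (y / p) * α := by simp only [hfdef]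
      have hGF : g y - f y = (1 - y / p) * q' + (y / p) * q := by
        simp only [hfdef, hgdef]; ring
      have hC : s * (g y - f y) = x - f y := div_mul_cancel₀ _ hw.ne'
      have key : Prod.swap ((y, x) : ℝ × ℝ)
          = (1 - y / p) • ((β + s * q', (0 : ℝ)) : ℝ × ℝ)
            + (y / p) • ((α + s * q, (p : ℝ)) : ℝ × ℝ) := by
        refine Prod.ext_iff.2 ⟨?_, ?_⟩
        · simp only [Prod.swap_prod_mk, Prod.fst_add, Prod.smul_fst, smul_eq_mul]
          linear_combination s * hGF + hF - hC
        · simp only [Prod.swap_prod_mk, Prod.snd_add, Prod.smul_snd, smul_eq_mul]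
          field_simp
          ring
      show Prod.swap ((y, x) : ℝ × ℝ) ∈ P
      rw [key]; exact hmem
    have hint_f : IntegrableOn f (Set.Ioo 0 (p : ℝ)) volume :=
      (hcf.integrableOn_Icc).mono_set Set.Ioo_subset_Icc_self
    have hint_g : IntegrableOn g (Set.Ioo 0 (p : ℝ)) volume :=
      (hcg.integrableOn_Icc).mono_set Set.Ioo_subset_Icc_self
    have hvol1 : volume.prod volume (regionBetween f g (Set.Ioo 0 (p : ℝ)))
        = ENNReal.ofReal (∫ y in Set.Ioo (0 : ℝ) (p : ℝ), (g - f) y) :=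
      volume_regionBetween_eq_integral hint_f hint_g measurableSet_Ioo hfg
    have hIval : (∫ y in Set.Ioo (0 : ℝ) (p : ℝ), (g - f) y)
        = (p : ℝ) * ((q : ℝ) + (q' : ℝ)) / 2 := by
      have hgf : (g - f) = fun y => (q' : ℝ) + (((q : ℝ) - q') / p) * y := by
        funext y
        simp only [Pi.sub_apply, hfdef, hgdef]
        ring
      rw [hgf, ← integral_Ioc_eq_integral_Ioo, ← intervalIntegral.integral_of_le hp0.le]
      rw [intervalIntegral.integral_add intervalIntegrable_const
        (intervalIntegral.intervalIntegrable_id.const_mul _)]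
      rw [intervalIntegral.integral_const, intervalIntegral.integral_const_mul, integral_id]
      simp only [smul_eq_mul]
      field_simp
      ring
    have hle : ENNReal.ofReal ((p : ℝ) * ((q : ℝ) + (q' : ℝ)) / 2) ≤ volume P := by
      calc ENNReal.ofReal ((p : ℝ) * ((q : ℝ) + (q' : ℝ)) / 2)
          = volume.prod volume (regionBetween f g (Set.Ioo 0 (p : ℝ))) := by
            rw [hvol1, hIval]
        _ ≤ volume.prod volume (Prod.swap ⁻¹' P) := measure_mono hregion
        _ = volume.prod volume P :=
            Measure.measurePreserving_swap.measure_preimage hPmeas.nullMeasurableSet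
        _ = volume P := by rw [← Measure.volume_eq_prod]
    have hfin : volume P ≠ ⊤ := hPcompact.measure_lt_top.ne
    have hmono := ENNReal.toReal_mono hfin hle
    rwa [ENNReal.toReal_ofReal (by positivity)] at hmono
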